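/- arXiv:2205.08494 — 3 statements merged into one kernel-verified Lean document; each statement's English description precedes it below -/
import Mathlib

section
/- Let X be a random vector in ℝ^d with E‖X‖⁴ finite, and suppose that for every standard basis vector e_i, (E⟨X,e_i⟩⁴)^{1/4} ≤ κ (E⟨X,e_i⟩²)^{1/2} with κ ≥ 0. Let Σ be the (entrywise) second-moment matrix of X, i.e. Σ_{ij} = E⟨X,e_i⟩⟨X,e_j⟩. Then E‖X‖₂⁴ ≤ κ⁴ (tr Σ)². -/
open MeasureTheory ProbabilityTheory
open scoped ProbabilityTheory

/-- If `X` is a random vector in `ℝ^d` with finite fourth moment such that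
for every standard basis direction `(𝔼⟨X,eᵢ⟩⁴)^{1/4} ≤ κ (𝔼⟨X,eᵢ⟩²)^{1/2}`, then
`𝔼‖X‖⁴ ≤ κ⁴ (tr Σ)²`, where `tr Σ = ∑ᵢ 𝔼⟨X,eᵢ⟩²`. -/
theorem fourth_moment_norm_bound {d : ℕ} {Ω : Type*} [MeasureSpace Ω]
    [IsProbabilityMeasure (ℙ : Measure Ω)]
    (X : Ω → EuclideanSpace ℝ (Fin d)) (κ : ℝ) (hκ : 0 ≤ κ)
    (hmeas : AEMeasurable X ℙ)
    (hint : Integrable (fun ω => ‖X ω‖ ^ 4) ℙ)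
    (hmom : ∀ i : Fin d,
      (∫ ω, (X ω i) ^ 4) ^ ((1 : ℝ) / 4) ≤ κ * (∫ ω, (X ω i) ^ 2) ^ ((1 : ℝ) / 2)) :
    ∫ ω, ‖X ω‖ ^ 4 ≤ κ ^ 4 * (∑ i : Fin d, ∫ ω, (X ω i) ^ 2) ^ 2 := by
  -- coordinate measurability
  have hXi : ∀ i : Fin d, AEMeasurable (fun ω => X ω i) ℙ := fun i =>
    (EuclideanSpace.proj i).continuous.measurable.comp_aemeasurable hmeas
  -- pointwise bound of coordinates by the norm
  have hsq : ∀ (ω : Ω) (i : Fin d), (X ω i) ^ 2 ≤ ‖X ω‖ ^ 2 := by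
    intro ω i
    have h : ‖X ω‖ ^ 2 = ∑ j : Fin d, (X ω j) ^ 2 := by
      rw [EuclideanSpace.norm_eq]
      rw [Real.sq_sqrt (Finset.sum_nonneg fun j _ => sq_nonneg _)]
      simp [Real.norm_eq_abs, sq_abs]
    rw [h]
    exact Finset.single_le_sum (f := fun j => (X ω j) ^ 2) (fun j _ => sq_nonneg _) (Finset.mem_univ i)
  have hbound : ∀ (ω : Ω) (i j : Fin d), (X ω i) ^ 2 * (X ω j) ^ 2 ≤ ‖X ω‖ ^ 4 := by
    intro ω i j
    calc (X ω i) ^ 2 * (X ω j) ^ 2 ≤ ‖X ω‖ ^ 2 * ‖X ω‖ ^ 2 :=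
          mul_le_mul (hsq ω i) (hsq ω j) (sq_nonneg _) (sq_nonneg _)
      _ = ‖X ω‖ ^ 4 := by ring
  -- integrability of products
  have hprod : ∀ i j : Fin d, Integrable (fun ω => (X ω i) ^ 2 * (X ω j) ^ 2) ℙ := by
    intro i j
    refine hint.mono' (((hXi i).pow_const 2).mul ((hXi j).pow_const 2)).aestronglyMeasurable ?_
    filter_upwards with ω
    rw [Real.norm_eq_abs, abs_of_nonneg (mul_nonneg (sq_nonneg _) (sq_nonneg _))]
    exact hbound ω i j
  have hint4 : ∀ i : Fin d, Integrable (fun ω => (X ω i) ^ 4) ℙ := by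
    intro i
    have := hprod i i
    simpa [← pow_add] using this
  -- Memℒp of coordinate squares
  have hmem : ∀ i : Fin d, MemLp (fun ω => (X ω i) ^ 2) (ENNReal.ofReal 2) ℙ := by
    intro i
    have h2 : ENNReal.ofReal (2:ℝ) = (2 : ENNReal) := by norm_num
    rw [h2, memLp_two_iff_integrable_sq ((hXi i).pow_const 2).aestronglyMeasurable]
    simpa [← pow_mul] using hint4 i
  have hconj : Real.HolderConjugate 2 2 := Real.holderConjugate_iff.mpr ⟨one_lt_two, by norm_num⟩
  -- squared moment hypothesis
  have hmom2 : ∀ i : Fin d, (∫ ω, (X ω i) ^ 4) ^ ((1 : ℝ) / 2) ≤ κ ^ 2 * ∫ ω, (X ω i) ^ 2 := by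
    intro i
    have h4 : (0 : ℝ) ≤ ∫ ω, (X ω i) ^ 4 := integral_nonneg fun ω => by positivity
    have h2 : (0 : ℝ) ≤ ∫ ω, (X ω i) ^ 2 := integral_nonneg fun ω => sq_nonneg _
    have hs := mul_self_le_mul_self (Real.rpow_nonneg h4 _) (hmom i)
    calc (∫ ω, (X ω i) ^ 4) ^ ((1 : ℝ) / 2)
        = (∫ ω, (X ω i) ^ 4) ^ ((1 : ℝ) / 4) * (∫ ω, (X ω i) ^ 4) ^ ((1 : ℝ) / 4) := by
          rw [← Real.rpow_add' h4 (by norm_num)]; norm_num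
      _ ≤ (κ * (∫ ω, (X ω i) ^ 2) ^ ((1 : ℝ) / 2)) * (κ * (∫ ω, (X ω i) ^ 2) ^ ((1 : ℝ) / 2)) := hs
      _ = κ ^ 2 * ((∫ ω, (X ω i) ^ 2) ^ ((1 : ℝ) / 2) * (∫ ω, (X ω i) ^ 2) ^ ((1 : ℝ) / 2)) := by
          ring
      _ = κ ^ 2 * ∫ ω, (X ω i) ^ 2 := by
          rw [← Real.rpow_add' h2 (by norm_num)]; norm_num
  -- Hölder for each pair
  have hCS : ∀ i j : Fin d, ∫ ω, (X ω i) ^ 2 * (X ω j) ^ 2 ≤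
      (κ ^ 2 * ∫ ω, (X ω i) ^ 2) * (κ ^ 2 * ∫ ω, (X ω j) ^ 2) := by
    intro i j
    have h := integral_mul_le_Lp_mul_Lq_of_nonneg hconj
      (Filter.Eventually.of_forall fun ω => sq_nonneg (X ω i))
      (Filter.Eventually.of_forall fun ω => sq_nonneg (X ω j)) (hmem i) (hmem j)
    have hpow : ∀ k : Fin d, ∫ ω, ((X ω k) ^ 2 : ℝ) ^ (2 : ℝ) = ∫ ω, (X ω k) ^ 4 := by
      intro k
      refine integral_congr_ae (Filter.Eventually.of_forall fun ω => ?_)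
      simp only [Real.rpow_two, ← pow_mul]
    rw [hpow i, hpow j] at h
    exact h.trans (mul_le_mul (hmom2 i) (hmom2 j) (Real.rpow_nonneg
      (integral_nonneg fun ω => by positivity) _) (by positivity))
  -- expand the fourth power of the norm
  have hexp : (fun ω => ‖X ω‖ ^ 4) =
      fun ω => ∑ i : Fin d, ∑ j : Fin d, (X ω i) ^ 2 * (X ω j) ^ 2 := by
    funext ω
    have h : ‖X ω‖ ^ 2 = ∑ j : Fin d, (X ω j) ^ 2 := by
      rw [EuclideanSpace.norm_eq]
      rw [Real.sq_sqrt (Finset.sum_nonneg fun j _ => sq_nonneg _)]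
      simp [Real.norm_eq_abs, sq_abs]
    calc ‖X ω‖ ^ 4 = ‖X ω‖ ^ 2 * ‖X ω‖ ^ 2 := by ring
      _ = (∑ i : Fin d, (X ω i) ^ 2) * (∑ j : Fin d, (X ω j) ^ 2) := by rw [h]
      _ = ∑ i : Fin d, ∑ j : Fin d, (X ω i) ^ 2 * (X ω j) ^ 2 := by
          rw [Finset.sum_mul_sum]
  calc ∫ ω, ‖X ω‖ ^ 4
      = ∫ ω, ∑ i : Fin d, ∑ j : Fin d, (X ω i) ^ 2 * (X ω j) ^ 2 := by rw [hexp]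
    _ = ∑ i : Fin d, ∑ j : Fin d, ∫ ω, (X ω i) ^ 2 * (X ω j) ^ 2 := by
        rw [integral_finset_sum _ fun i _ => integrable_finset_sum _ fun j _ => hprod i j]
        exact Finset.sum_congr rfl fun i _ => integral_finset_sum _ fun j _ => hprod i j
    _ ≤ ∑ i : Fin d, ∑ j : Fin d, (κ ^ 2 * ∫ ω, (X ω i) ^ 2) * (κ ^ 2 * ∫ ω, (X ω j) ^ 2) := by
        refine Finset.sum_le_sum fun i _ => Finset.sum_le_sum fun j _ => hCS i j
    _ = κ ^ 4 * (∑ i : Fin d, ∫ ω, (X ω i) ^ 2) ^ 2 := by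
        rw [← Finset.sum_mul_sum, ← Finset.mul_sum]
        ring
end

section
/- Define ψ as the truncation function ψ(x)= x on [-1,1], sign(x) outside. For every real a > 0 and every square-integrable random variable Z, E log(1 + Z + Z²) + a·E min{1, Z²/6} ≤ E log(1 + Z + (1 + (7+√6)(e^a − 1)/6) Z²). -/
open MeasureTheory ProbabilityTheory
open scoped ProbabilityTheory

/-- The truncation function `ψ(x) = x` on `[-1,1]` and `ψ(x) = sign x` for `|x| > 1`. -/
noncomputable def trunc (x : ℝ) : ℝ := if |x| ≤ 1 then x else Real.sign x

lemma exp_mul_le (a s : ℝ) (h0 : 0 ≤ s) (h1 : s ≤ 1) :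
    Real.exp (a * s) ≤ 1 + s * (Real.exp a - 1) := by
  have h := convexOn_exp.2 (Set.mem_univ (0:ℝ)) (Set.mem_univ a)
      (by linarith : (0:ℝ) ≤ 1 - s) h0 (by ring)
  simp only [smul_eq_mul, mul_zero, zero_add, Real.exp_zero, mul_one] at h
  rw [mul_comm]
  nlinarith [h]

lemma quad_pos (k z : ℝ) (hk : 1 ≤ k) : 0 < 1 + z + k * z ^ 2 := by
  nlinarith [sq_nonneg (z + 1/2), sq_nonneg z]

lemma key_ineq (a : ℝ) (ha : 0 < a) (z : ℝ) :
    (1 + z + z ^ 2) * Real.exp (a * min 1 (z ^ 2 / 6))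
      ≤ 1 + z + (1 + (7 + Real.sqrt 6) * (Real.exp a - 1) / 6) * z ^ 2 := by
  have hb : 0 < Real.exp a - 1 := by
    nlinarith [Real.add_one_lt_exp ha.ne']
  have hs6 : Real.sqrt 6 * Real.sqrt 6 = 6 := Real.mul_self_sqrt (by norm_num)
  have hpos : (0:ℝ) < 1 + z + z ^ 2 := by nlinarith [sq_nonneg (z + 1/2)]
  rcases le_or_gt (z ^ 2 / 6) 1 with h | h
  · rw [min_eq_right h]
    have hz2 : z ^ 2 ≤ 6 := by linarith
    have hzabs : |z| ≤ Real.sqrt 6 := by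
      rw [← Real.sqrt_sq_eq_abs]
      exact Real.sqrt_le_sqrt hz2
    have hz : z ≤ Real.sqrt 6 := (le_abs_self z).trans hzabs
    have hexp : Real.exp (a * (z ^ 2 / 6)) ≤ 1 + (z ^ 2 / 6) * (Real.exp a - 1) :=
      exp_mul_le a _ (by positivity) h
    have hmul : (1 + z + z ^ 2) * Real.exp (a * (z ^ 2 / 6))
        ≤ (1 + z + z ^ 2) * (1 + (z ^ 2 / 6) * (Real.exp a - 1)) :=
      mul_le_mul_of_nonneg_left hexp hpos.le
    refine hmul.trans ?_
    nlinarith [mul_nonneg (mul_nonneg hb.le (sq_nonneg z)) (sub_nonneg.2 hz),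
      mul_nonneg (mul_nonneg hb.le (sq_nonneg z)) (sub_nonneg.2 hz2)]
  · rw [min_eq_left h.le]
    have hz2 : 6 ≤ z ^ 2 := by linarith
    have hzabs : Real.sqrt 6 ≤ |z| := by
      rw [← Real.sqrt_sq_eq_abs]
      exact Real.sqrt_le_sqrt hz2
    have hu : 0 ≤ |z| - Real.sqrt 6 := sub_nonneg.2 hzabs
    have habs2 : |z| * |z| = z ^ 2 := by rw [← abs_mul, abs_mul_self]; ring
    have hzle : z ≤ |z| := le_abs_self z
    have hkey : 6 * (1 + z + z ^ 2) ≤ (7 + Real.sqrt 6) * z ^ 2 := by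
      nlinarith [mul_nonneg hu hu, mul_nonneg (Real.sqrt_nonneg 6) hu,
        mul_nonneg hu (abs_nonneg z)]
    rw [mul_one]
    nlinarith [mul_le_mul_of_nonneg_left hkey hb.le]

lemma log_integrable {Ω : Type*} [MeasureSpace Ω] [IsProbabilityMeasure (ℙ : Measure Ω)]
    (Z : Ω → ℝ) (hZ : MemLp Z 2 ℙ) (k : ℝ) (hk : 1 ≤ k) :
    Integrable (fun ω => Real.log (1 + Z ω + k * (Z ω) ^ 2)) ℙ := by
  have hZm := hZ.aestronglyMeasurable.aemeasurable
  have hZ1 : Integrable Z ℙ := (hZ.mono_exponent (by norm_num)).integrable le_rfl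
  have hsq : Integrable (fun ω => (Z ω) ^ 2) ℙ := hZ.integrable_sq
  have hmeas : AEMeasurable (fun ω => 1 + Z ω + k * (Z ω) ^ 2) ℙ :=
    (aemeasurable_const.add hZm).add (aemeasurable_const.mul (hZm.pow_const 2))
  refine Integrable.mono' ((integrable_const 1).add (hZ1.abs.add (hsq.const_mul k)))
    (Real.measurable_log.comp_aemeasurable hmeas).aestronglyMeasurable ?_
  filter_upwards with ω
  set z := Z ω
  have hpos : 0 < 1 + z + k * z ^ 2 := quad_pos k z hk
  have hge : (3/4 : ℝ) ≤ 1 + z + k * z ^ 2 := by nlinarith [sq_nonneg (z + 1/2), sq_nonneg z]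
  have hknn : 0 ≤ k * z ^ 2 := by positivity
  simp only [Pi.add_apply, Real.norm_eq_abs]
  rw [abs_le]
  constructor
  · have h1 := Real.log_le_sub_one_of_pos (inv_pos.2 hpos)
    rw [Real.log_inv] at h1
    have h2 : (1 + z + k * z ^ 2)⁻¹ ≤ 4/3 := by
      rw [inv_le_comm₀ hpos (by norm_num)]
      linarith
    have := abs_nonneg z
    nlinarith
  · have h1 := Real.log_le_sub_one_of_pos hpos
    have := le_abs_self z
    nlinarith

/-- For every `a > 0` and square-integrable `Z`,
`𝔼 log(1 + Z + Z²) + a 𝔼 min{1, Z²/6} ≤ 𝔼 log(1 + Z + (1 + (7+√6)(eᵃ−1)/6) Z²)`. -/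
theorem trunc_log_ineq {Ω : Type*} [MeasureSpace Ω] [IsProbabilityMeasure (ℙ : Measure Ω)]
    (Z : Ω → ℝ) (hZ : MemLp Z 2 ℙ) (a : ℝ) (ha : 0 < a) :
    (∫ ω, Real.log (1 + Z ω + (Z ω) ^ 2)) + a * ∫ ω, min 1 ((Z ω) ^ 2 / 6)
      ≤ ∫ ω, Real.log (1 + Z ω
          + (1 + (7 + Real.sqrt 6) * (Real.exp a - 1) / 6) * (Z ω) ^ 2) := by
  have hb : 0 < Real.exp a - 1 := by nlinarith [Real.add_one_lt_exp ha.ne']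
  have hc : 1 ≤ 1 + (7 + Real.sqrt 6) * (Real.exp a - 1) / 6 := by
    have := Real.sqrt_nonneg 6
    nlinarith
  have h1 : Integrable (fun ω => Real.log (1 + Z ω + (Z ω) ^ 2)) ℙ := by
    simpa using log_integrable Z hZ 1 le_rfl
  have h3 : Integrable (fun ω => Real.log (1 + Z ω
      + (1 + (7 + Real.sqrt 6) * (Real.exp a - 1) / 6) * (Z ω) ^ 2)) ℙ :=
    log_integrable Z hZ _ hc
  have hZm := hZ.aestronglyMeasurable.aemeasurable
  have h2 : Integrable (fun ω => min 1 ((Z ω) ^ 2 / 6)) ℙ := by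
    refine Integrable.mono' (integrable_const 1)
      (aemeasurable_const.min ((hZm.pow_const 2).div_const 6)).aestronglyMeasurable ?_
    filter_upwards with ω
    have h0 : 0 ≤ min 1 ((Z ω) ^ 2 / 6) := le_min zero_le_one (by positivity)
    rw [Real.norm_eq_abs, abs_of_nonneg h0]
    exact min_le_left _ _
  rw [← integral_const_mul, ← integral_add h1 (h2.const_mul a)]
  refine integral_mono (h1.add (h2.const_mul a)) h3 fun ω => ?_
  set z := Z ω
  have hpos : (0:ℝ) < 1 + z + z ^ 2 := by nlinarith [sq_nonneg (z + 1/2)]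
  have hkey := key_ineq a ha z
  have heq : Real.log (1 + z + z ^ 2) + a * min 1 (z ^ 2 / 6)
      = Real.log ((1 + z + z ^ 2) * Real.exp (a * min 1 (z ^ 2 / 6))) := by
    rw [Real.log_mul hpos.ne' (Real.exp_ne_zero _), Real.log_exp]
  simp only [Pi.add_apply]
  rw [heq]
  exact Real.log_le_log (by positivity) hkey
end

section
/- Let Y be a real random variable taking values −1/√η, −1, 1, 1/√η with probabilities η/2, (1−η)/2, (1−η)/2, η/2 respectively, where 0 < η ≤ 1/4. Then E Y = 0, E Y² = 2 − η ≤ 2, the (η/2)-quantile satisfies Q_{η/2}(Y) = −1 (i.e. P(Y ≥ −1) = 1 − η/2 and P(Y ≥ t) < 1 − η/2 for every t > −1), and E|Y + 1|·1{Y ≤ −1} = √η/2 − η/2 ≥ √η/4. -/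
open MeasureTheory ProbabilityTheory
open scoped ProbabilityTheory ENNReal

/-- The four-atom random variable underlying the `√η` lower bound:
`Y` takes values `−1/√η, −1, 1, 1/√η` with probabilities `η/2, (1−η)/2, (1−η)/2, η/2`
(`0 < η ≤ 1/4`). Then `𝔼Y = 0`, `𝔼Y² = 2 − η ≤ 2`, `Q_{η/2}(Y) = −1`, and
`𝔼|Y+1|1{Y ≤ −1} = √η/2 − η/2 ≥ √η/4`. -/
theorem four_atom_lower_bound {Ω : Type*} [MeasureSpace Ω]
    [IsProbabilityMeasure (ℙ : Measure Ω)]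
    (η : ℝ) (hη : 0 < η) (hη' : η ≤ 1 / 4)
    (Y : Ω → ℝ) (hYmeas : Measurable Y)
    (hrange : ∀ ω, Y ω ∈ ({-(1 / Real.sqrt η), -1, 1, 1 / Real.sqrt η} : Set ℝ))
    (h1 : ℙ {ω | Y ω = -(1 / Real.sqrt η)} = ENNReal.ofReal (η / 2))
    (h2 : ℙ {ω | Y ω = -1} = ENNReal.ofReal ((1 - η) / 2))
    (h3 : ℙ {ω | Y ω = 1} = ENNReal.ofReal ((1 - η) / 2))
    (h4 : ℙ {ω | Y ω = 1 / Real.sqrt η} = ENNReal.ofReal (η / 2)) :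
    (∫ ω, Y ω = 0)
    ∧ (∫ ω, (Y ω) ^ 2 = 2 - η) ∧ (2 - η ≤ (2 : ℝ))
    ∧ ℙ {ω | -1 ≤ Y ω} = ENNReal.ofReal (1 - η / 2)
    ∧ (∀ t : ℝ, -1 < t → ℙ {ω | t ≤ Y ω} < ENNReal.ofReal (1 - η / 2))
    ∧ (∫ ω in {ω | Y ω ≤ -1}, |Y ω + 1| = Real.sqrt η / 2 - η / 2)
    ∧ Real.sqrt η / 4 ≤ Real.sqrt η / 2 - η / 2 := by
  set s : ℝ := Real.sqrt η with hs_def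
  have hs : 0 < s := Real.sqrt_pos.mpr hη
  have hηs : η = s ^ 2 := (Real.sq_sqrt hη.le).symm
  have hs2 : s ≤ 1 / 2 := by
    have h := Real.sqrt_le_sqrt hη'
    rwa [show (1:ℝ)/4 = (1/2)^2 by norm_num, Real.sqrt_sq (by norm_num)] at h
  have hinv : 2 ≤ 1 / s := by
    rw [le_div_iff₀ hs]; linarith
  -- atoms
  set a₁ : ℝ := -(1 / s)
  set A₁ := {ω | Y ω = a₁} with hA₁
  set A₂ := {ω | Y ω = -1} with hA₂
  set A₃ := {ω | Y ω = (1:ℝ)} with hA₃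
  set A₄ := {ω | Y ω = 1 / s} with hA₄
  have hA₁m : MeasurableSet A₁ := hYmeas (measurableSet_singleton _)
  have hA₂m : MeasurableSet A₂ := hYmeas (measurableSet_singleton _)
  have hA₃m : MeasurableSet A₃ := hYmeas (measurableSet_singleton _)
  have hA₄m : MeasurableSet A₄ := hYmeas (measurableSet_singleton _)
  have hd12 : a₁ ≠ -1 := by simp only [a₁]; intro h; nlinarith
  have hd13 : a₁ ≠ 1 := by simp only [a₁]; intro h; nlinarith
  have hd14 : a₁ ≠ 1 / s := by simp only [a₁]; intro h; nlinarith
  have hd23 : (-1 : ℝ) ≠ 1 := by norm_num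
  have hd24 : (-1 : ℝ) ≠ 1 / s := by intro h; nlinarith
  have hd34 : (1 : ℝ) ≠ 1 / s := by intro h; nlinarith
  have hd14' : a₁ ≠ s⁻¹ := by rw [← one_div]; exact hd14
  have hd24' : (-1 : ℝ) ≠ s⁻¹ := by rw [← one_div]; exact hd24
  have hd34' : (1 : ℝ) ≠ s⁻¹ := by rw [← one_div]; exact hd34
  have hη2 : (0:ℝ) ≤ η / 2 := by linarith
  have h1η2 : (0:ℝ) ≤ (1 - η) / 2 := by linarith
  -- generic integral formula
  have key : ∀ g : ℝ → ℝ, (∫ ω, g (Y ω)) =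
      g a₁ * (η / 2) + g (-1) * ((1 - η) / 2) + g 1 * ((1 - η) / 2) + g (1 / s) * (η / 2) := by
    intro g
    have heq : (fun ω => g (Y ω)) =
        A₁.indicator (fun _ => g a₁) + A₂.indicator (fun _ => g (-1))
        + A₃.indicator (fun _ => g 1) + A₄.indicator (fun _ => g (1 / s)) := by
      funext ω
      simp only [Pi.add_apply]
      have hr := hrange ω
      simp only [Set.mem_insert_iff, Set.mem_singleton_iff] at hr
      rcases hr with h | h | h | h <;>
        simp [Set.indicator, hA₁, hA₂, hA₃, hA₄, h, hd12, hd13, hd14, hd23, hd24, hd34,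
          hd14', hd24', hd34', hd12.symm, hd13.symm, hd14.symm, hd23.symm, hd24.symm, hd34.symm, hd14'.symm, hd24'.symm, hd34'.symm]
    have i1 : Integrable (A₁.indicator (fun _ => g a₁)) ℙ :=
      (integrable_const _).indicator hA₁m
    have i2 : Integrable (A₂.indicator (fun _ => g (-1))) ℙ :=
      (integrable_const _).indicator hA₂m
    have i3 : Integrable (A₃.indicator (fun _ => g 1)) ℙ :=
      (integrable_const _).indicator hA₃m
    have i4 : Integrable (A₄.indicator (fun _ => g (1 / s))) ℙ :=
      (integrable_const _).indicator hA₄m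
    rw [heq, integral_add' (((i1.add i2).add i3)) i4, integral_add' (i1.add i2) i3,
      integral_add' i1 i2, integral_indicator_const _ hA₁m, integral_indicator_const _ hA₂m,
      integral_indicator_const _ hA₃m, integral_indicator_const _ hA₄m,
      measureReal_def, measureReal_def, measureReal_def, measureReal_def,
      h1, h2, h3, h4, ENNReal.toReal_ofReal hη2, ENNReal.toReal_ofReal h1η2]
    simp [smul_eq_mul]; ring
  refine ⟨?_, ?_, by linarith, ?_, ?_, ?_, ?_⟩
  · have := key id
    simp only [id] at this
    rw [this]; simp only [a₁]; ring
  · have := key (fun x => x ^ 2)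
    rw [this]
    simp only [a₁]
    field_simp
    nlinarith [hηs]
  · have hset : {ω | -1 ≤ Y ω} = A₂ ∪ A₃ ∪ A₄ := by
      ext ω
      have hr := hrange ω
      simp only [Set.mem_insert_iff, Set.mem_singleton_iff] at hr
      simp only [Set.mem_setOf_eq, Set.mem_union, hA₂, hA₃, hA₄, Set.mem_setOf_eq]
      constructor
      · intro h
        rcases hr with h' | h' | h' | h'
        · exfalso; rw [h'] at h; simp only [a₁] at h; nlinarith
        · exact Or.inl (Or.inl h')
        · exact Or.inl (Or.inr h')
        · exact Or.inr h'
      · rintro ((h | h) | h) <;> rw [h] <;> nlinarith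
    have hdisj1 : Disjoint A₂ A₃ := by
      rw [Set.disjoint_left]; intro ω h h'
      exact hd23 (h.symm.trans h')
    have hdisj2 : Disjoint (A₂ ∪ A₃) A₄ := by
      rw [Set.disjoint_left]; rintro ω (h | h) h'
      · exact hd24 (h.symm.trans h')
      · exact hd34 (h.symm.trans h')
    rw [hset, measure_union hdisj2 hA₄m, measure_union hdisj1 hA₃m, h2, h3, h4,
      ← ENNReal.ofReal_add h1η2 h1η2, ← ENNReal.ofReal_add (by linarith) hη2]
    congr 1; ring
  · intro t ht
    have hsub : {ω | t ≤ Y ω} ⊆ A₃ ∪ A₄ := by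
      intro ω h
      have hr := hrange ω
      simp only [Set.mem_insert_iff, Set.mem_singleton_iff] at hr
      simp only [Set.mem_setOf_eq] at h
      simp only [Set.mem_union, hA₃, hA₄, Set.mem_setOf_eq]
      rcases hr with h' | h' | h' | h'
      · exfalso; rw [h'] at h; simp only [a₁] at h; nlinarith
      · exfalso; rw [h'] at h; linarith
      · exact Or.inl h'
      · exact Or.inr h'
    calc ℙ {ω | t ≤ Y ω} ≤ ℙ (A₃ ∪ A₄) := measure_mono hsub
      _ ≤ ℙ A₃ + ℙ A₄ := measure_union_le _ _
      _ = ENNReal.ofReal (1 / 2) := by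
          rw [h3, h4, ← ENNReal.ofReal_add h1η2 hη2]; congr 1; ring
      _ < ENNReal.ofReal (1 - η / 2) := by
          rw [ENNReal.ofReal_lt_ofReal_iff (by linarith)]; linarith
  · have hset : {ω | Y ω ≤ -1} = A₁ ∪ A₂ := by
      ext ω
      have hr := hrange ω
      simp only [Set.mem_insert_iff, Set.mem_singleton_iff] at hr
      simp only [Set.mem_setOf_eq, Set.mem_union, hA₁, hA₂, Set.mem_setOf_eq]
      constructor
      · intro h
        rcases hr with h' | h' | h' | h'
        · exact Or.inl h'
        · exact Or.inr h'
        · exfalso; rw [h'] at h; linarith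
        · exfalso; rw [h'] at h; nlinarith
      · rintro (h | h)
        · rw [h]; simp only [a₁]; nlinarith
        · rw [h]
    have hdisj : Disjoint A₁ A₂ := by
      rw [Set.disjoint_left]; intro ω h h'
      exact hd12 (h.symm.trans h')
    have hi1 : IntegrableOn (fun ω => |Y ω + 1|) A₁ ℙ := by
      refine (integrableOn_const (measure_ne_top _ _) :
        IntegrableOn (fun _ => |a₁ + 1|) A₁ ℙ).congr_fun ?_ hA₁m
      intro ω hω; simp only [hA₁, Set.mem_setOf_eq] at hω
      simp [hω]
    have hi2 : IntegrableOn (fun ω => |Y ω + 1|) A₂ ℙ := by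
      refine (integrableOn_const (measure_ne_top _ _) :
        IntegrableOn (fun _ => |(-1 : ℝ) + 1|) A₂ ℙ).congr_fun ?_ hA₂m
      intro ω hω; simp only [hA₂, Set.mem_setOf_eq] at hω
      simp [hω]
    rw [hset, setIntegral_union hdisj hA₂m hi1 hi2]
    have e1 : ∫ ω in A₁, |Y ω + 1| = (η / 2) * (1 / s - 1) := by
      rw [setIntegral_congr_fun hA₁m (g := fun _ => |a₁ + 1|)
        (fun ω hω => by simp only [hA₁, Set.mem_setOf_eq] at hω; simp [hω]),
        setIntegral_const, measureReal_def, h1, ENNReal.toReal_ofReal hη2]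
      have : |a₁ + 1| = 1 / s - 1 := by
        rw [abs_of_nonpos (by simp only [a₁]; nlinarith)]; simp only [a₁]; ring
      rw [this, smul_eq_mul]
    have e2 : ∫ ω in A₂, |Y ω + 1| = 0 := by
      rw [setIntegral_congr_fun hA₂m (g := fun _ => (0:ℝ))
        (fun ω hω => by simp only [hA₂, Set.mem_setOf_eq] at hω; simp [hω])]
      simp
    rw [e1, e2]
    have : η / s = s := by rw [hηs]; field_simp
    field_simp
    nlinarith [hηs]
  · nlinarith [hηs]
end
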